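/- arXiv:1708.05901 — 6 statements merged into one kernel-verified Lean document; each statement's English description precedes it below -/
import Mathlib

section
/- Let |v⟩ ∈ ℂ^m ⊗ ℂ^n with m ≤ n have Schmidt coefficients α₁ ≥ α₂ ≥ ⋯ ≥ α_m ≥ 0 (i.e., |v⟩ = Σⱼ αⱼ |bⱼ⟩⊗|cⱼ⟩ for orthonormal sets {|bⱼ⟩} ⊆ ℂ^m and {|cⱼ⟩} ⊆ ℂ^n). Then the matrix (|v⟩⟨v|)^Γ (the partial transpose on the second factor) has eigenvalues αⱼ² for 1 ≤ j ≤ m, ±αᵢαⱼ for 1 ≤ i < j ≤ m, and 0 with multiplicity m(n−m). -/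
open Matrix BigOperators Polynomial
open scoped ComplexOrder

noncomputable section

/-- Partial transpose on the second tensor factor. -/
def partialTranspose {m n : ℕ} (A : Matrix (Fin m × Fin n) (Fin m × Fin n) ℂ) :
    Matrix (Fin m × Fin n) (Fin m × Fin n) ℂ :=
  Matrix.of fun p q => A (p.1, q.2) (q.1, p.2)

section Aux


lemma charpoly_of_similar {R : Type*} [CommRing R] {ι : Type*} [DecidableEq ι] [Fintype ι]
    (A B V : Matrix ι ι R) (hV : IsUnit V.det) (h : A * V = V * B) :
    A.charpoly = B.charpoly := by
  have key : charmatrix A * V.map C = V.map C * charmatrix B := by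
    unfold charmatrix
    rw [sub_mul, mul_sub]
    congr 1
    · exact (Matrix.scalar_commute X (fun r => Commute.all _ _) (V.map C)).eq
    · show (C : R →+* R[X]).mapMatrix A * (C : R →+* R[X]).mapMatrix V
        = (C : R →+* R[X]).mapMatrix V * (C : R →+* R[X]).mapMatrix B
      rw [← _root_.map_mul, ← _root_.map_mul, h]
  have hdet := congrArg Matrix.det key
  rw [det_mul, det_mul] at hdet
  have hu : IsUnit (V.map C).det := by
    rw [← RingHom.mapMatrix_apply, ← RingHom.map_det]
    exact hV.map _
  unfold Matrix.charpoly
  rw [mul_comm (charmatrix A).det] at hdet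
  exact hu.mul_left_cancel hdet

lemma charpoly_diagonal' {R : Type*} [CommRing R] {ι : Type*} [DecidableEq ι] [Fintype ι]
    (d : ι → R) : (diagonal d).charpoly = ∏ i, (X - C (d i)) := by
  have : charmatrix (diagonal d) = diagonal fun i => X - C (d i) := by
    ext i j
    by_cases h : i = j
    · subst h; simp [charmatrix_apply]
    · simp [charmatrix_apply, diagonal_apply_ne _ h, h]
  rw [Matrix.charpoly, this, det_diagonal]

lemma charpoly_hermitian {ι : Type*} [DecidableEq ι] [Fintype ι]
    (A : Matrix ι ι ℂ) (hA : A.IsHermitian) :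
    A.charpoly = ∏ i, (X - C ((hA.eigenvalues i : ℝ) : ℂ)) := by
  set U : Matrix ι ι ℂ := (hA.eigenvectorUnitary : Matrix ι ι ℂ) with hU
  have hmem := hA.eigenvectorUnitary.2
  have h1 : star U * U = 1 := mem_unitaryGroup_iff'.mp hmem
  have h2 : U * star U = 1 := mem_unitaryGroup_iff.mp hmem
  have hAU : A * U = U * diagonal (fun i => ((hA.eigenvalues i : ℝ) : ℂ)) := by
    conv_lhs => rw [hA.spectral_theorem]
    rw [Unitary.conjStarAlgAut_apply, mul_assoc, h1, mul_one]
    rfl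
  have hdet : IsUnit U.det := by
    apply IsUnit.of_mul_eq_one (star U).det
    rw [← det_mul, h2, det_one]
  rw [charpoly_of_similar A _ U hdet hAU, charpoly_diagonal']


lemma extend_orthonormal {m n : ℕ} (hmn : m ≤ n) (c : Fin m → Fin n → ℂ)
    (hc : ∀ i j, star (c i) ⬝ᵥ c j = if i = j then 1 else 0) :
    ∃ c' : Fin n → Fin n → ℂ,
      (∀ i j, star (c' i) ⬝ᵥ c' j = if i = j then 1 else 0) ∧
      (∀ j : Fin m, c' (Fin.castLE hmn j) = c j) := by
  classical
  set E := EuclideanSpace ℂ (Fin n)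
  set vext : Fin n → E := fun i =>
    (WithLp.equiv 2 (Fin n → ℂ)).symm (if h : (i : ℕ) < m then c ⟨i, h⟩ else 0) with hvext
  set s : Set (Fin n) := {i | (i : ℕ) < m} with hs
  have hvo : Orthonormal ℂ (s.restrict vext) := by
    rw [orthonormal_iff_ite]
    rintro ⟨i, hi⟩ ⟨j, hj⟩
    simp only [Set.restrict_apply, hvext]
    rw [EuclideanSpace.inner_eq_star_dotProduct, dotProduct_comm]
    change star (if h : (i:ℕ) < m then c ⟨i, h⟩ else 0) ⬝ᵥ (if h : (j:ℕ) < m then c ⟨j, h⟩ else 0) = _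
    have hi' : (i:ℕ) < m := hi
    have hj' : (j:ℕ) < m := hj
    rw [dif_pos hi', dif_pos hj', hc]
    congr 1
    simp [Subtype.ext_iff, Fin.ext_iff]
  obtain ⟨C', hC'⟩ := hvo.exists_orthonormalBasis_extension_of_card_eq
    (by simp [E])
  refine ⟨fun k => WithLp.equiv 2 (Fin n → ℂ) (C' k), ?_, ?_⟩
  · intro i j
    have := orthonormal_iff_ite.mp C'.orthonormal i j
    rwa [EuclideanSpace.inner_eq_star_dotProduct, dotProduct_comm] at this
  · intro j
    have hmem : (Fin.castLE hmn j : Fin n) ∈ s := by simp [hs]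
    have h2 := hC' _ hmem
    show WithLp.equiv 2 (Fin n → ℂ) (C' (Fin.castLE hmn j)) = c j
    rw [h2, hvext]
    simp only [Fin.coe_castLE, Fin.is_lt, dif_pos, Equiv.apply_symm_apply]

def uFun (b : Fin m → Fin m → ℂ) (c' : Fin n → Fin n → ℂ) (a p : Fin m × Fin n) : ℂ :=
  b a.1 p.1 * (starRingEnd ℂ) (c' a.2 p.2)


variable {m n : ℕ}

def sigmaFun (hmn : m ≤ n) (a : Fin m × Fin n) : Fin m × Fin n :=
  if h : (a.2 : ℕ) < m then (⟨a.2, h⟩, Fin.castLE hmn a.1) else a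

def sgFun (a : Fin m × Fin n) : ℂ :=
  if (a.2 : ℕ) < m then
    (if (a.1 : ℕ) < (a.2 : ℕ) then 1 else if (a.2 : ℕ) < (a.1 : ℕ) then -1 else 0)
  else 0

def dFun (α : Fin m → ℝ) (a : Fin m × Fin n) : ℝ :=
  if h : (a.2 : ℕ) < m then
    (if (a.2 : ℕ) < (a.1 : ℕ) then -(α a.1 * α ⟨a.2, h⟩) else α a.1 * α ⟨a.2, h⟩)
  else 0

lemma sigma_sigma (hmn : m ≤ n) (a : Fin m × Fin n) : sigmaFun hmn (sigmaFun hmn a) = a := by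
  unfold sigmaFun
  by_cases h : (a.2 : ℕ) < m
  · rw [dif_pos h]
    have h2 : ((Fin.castLE hmn a.1 : Fin n) : ℕ) < m := a.1.isLt
    rw [dif_pos h2]
    ext <;> simp
  · rw [dif_neg h, dif_neg h]

lemma fixed_iff (hmn : m ≤ n) (a : Fin m × Fin n) (h : (a.2 : ℕ) < m) :
    sigmaFun hmn a = a ↔ (a.1 : ℕ) = (a.2 : ℕ) := by
  unfold sigmaFun
  rw [dif_pos h, Prod.ext_iff, Fin.ext_iff, Fin.ext_iff]
  simp only [Fin.coe_castLE]
  omega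

lemma sg_sigma (hmn : m ≤ n) (a : Fin m × Fin n) : sgFun (sigmaFun hmn a) = - sgFun a := by
  by_cases h : (a.2 : ℕ) < m
  · have he : sigmaFun hmn a = (⟨a.2, h⟩, Fin.castLE hmn a.1) := dif_pos h
    rw [he]
    unfold sgFun
    simp only [Fin.coe_castLE]
    have h1 := a.1.isLt
    split_ifs <;> (try norm_num) <;> omega
  · have he : sigmaFun hmn a = a := dif_neg h
    rw [he]
    unfold sgFun
    rw [if_neg h]
    norm_num

lemma sg_conj (a : Fin m × Fin n) : (starRingEnd ℂ) (sgFun a) = sgFun a := by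
  unfold sgFun
  split_ifs <;> simp

lemma sg_sq (hmn : m ≤ n) (a : Fin m × Fin n) :
    sgFun a * sgFun a = if sigmaFun hmn a = a then 0 else 1 := by
  by_cases h : (a.2 : ℕ) < m
  · by_cases hfix : sigmaFun hmn a = a
    · rw [if_pos hfix]
      have := (fixed_iff hmn a h).mp hfix
      unfold sgFun
      split_ifs <;> (try norm_num) <;> omega
    · rw [if_neg hfix]
      have h12 : (a.1 : ℕ) ≠ (a.2 : ℕ) := fun hh => hfix ((fixed_iff hmn a h).mpr hh)
      unfold sgFun
      split_ifs <;> (try norm_num) <;> omega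
  · have hfix : sigmaFun hmn a = a := dif_neg h
    rw [if_pos hfix]
    unfold sgFun
    rw [if_neg h]
    norm_num

lemma sg_of_fixed (hmn : m ≤ n) (a : Fin m × Fin n) (hfix : sigmaFun hmn a = a) :
    sgFun a = 0 := by
  have := sg_sq hmn a
  rw [if_pos hfix] at this
  exact mul_self_eq_zero.mp this

lemma sigma_inj (hmn : m ≤ n) : Function.Injective (sigmaFun hmn) :=
  Function.LeftInverse.injective (sigma_sigma hmn)

lemma multiset_dFun (hmn : m ≤ n) (α : Fin m → ℝ) :
    Finset.univ.val.map (dFun (n := n) α) =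
      Finset.univ.val.map (fun j : Fin m => α j ^ 2)
      + (Finset.univ.filter (fun p : Fin m × Fin m => p.1 < p.2)).val.map
          (fun p => α p.1 * α p.2)
      + (Finset.univ.filter (fun p : Fin m × Fin m => p.1 < p.2)).val.map
          (fun p => -(α p.1 * α p.2))
      + Multiset.replicate (m * (n - m)) 0 := by
  classical
  -- split off the k ≥ m part
  have hsplit : (Finset.univ.val : Multiset (Fin m × Fin n)) =
      Multiset.filter (fun a => (a.2 : ℕ) < m) Finset.univ.val
      + Multiset.filter (fun a => ¬ (a.2 : ℕ) < m) Finset.univ.val :=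
    (Multiset.filter_add_not _ _).symm
  rw [hsplit, Multiset.map_add]
  -- zero part
  have hzero : Multiset.map (dFun α)
      (Multiset.filter (fun a => ¬ (a.2 : ℕ) < m) (Finset.univ.val : Multiset (Fin m × Fin n)))
      = Multiset.replicate (m * (n - m)) 0 := by
    have hc : ∀ a ∈ Multiset.filter (fun a : Fin m × Fin n => ¬ (a.2 : ℕ) < m) Finset.univ.val,
        dFun α a = (fun _ => (0:ℝ)) a := by
      intro a ha
      have := (Multiset.mem_filter.mp ha).2
      simp only [dFun, dif_neg this]
    rw [Multiset.map_congr rfl hc]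
    have : Multiset.map (fun _ => (0:ℝ)) (Multiset.filter (fun a : Fin m × Fin n => ¬ (a.2:ℕ) < m) Finset.univ.val)
        = Multiset.replicate (Multiset.card (Multiset.filter (fun a : Fin m × Fin n => ¬ (a.2:ℕ) < m) Finset.univ.val)) (0:ℝ) :=
      Multiset.map_const' _ 0
    rw [this]
    congr 1
    have hfv : Multiset.filter (fun a : Fin m × Fin n => ¬ (a.2:ℕ) < m) Finset.univ.val
        = (Finset.univ.filter (fun a : Fin m × Fin n => ¬ (a.2:ℕ) < m)).val := rfl
    rw [hfv, ← Finset.card_def]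
    have hprod : Finset.univ.filter (fun a : Fin m × Fin n => ¬ (a.2:ℕ) < m)
        = (Finset.univ : Finset (Fin m)) ×ˢ (Finset.univ.filter (fun k : Fin n => ¬ (k:ℕ) < m)) := by
      ext ⟨j, k⟩
      simp
    rw [hprod, Finset.card_product, Finset.card_univ, Fintype.card_fin]
    congr 1
    have hlt : (Finset.univ.filter (fun k : Fin n => (k:ℕ) < m)).card = m := by
      have : Finset.univ.filter (fun k : Fin n => (k:ℕ) < m)
          = Finset.map ⟨Fin.castLE hmn, Fin.castLE_injective hmn⟩ Finset.univ := by
        ext k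
        simp only [Finset.mem_filter, Finset.mem_univ, true_and, Finset.mem_map,
          Function.Embedding.coeFn_mk]
        constructor
        · intro hk; exact ⟨⟨k, hk⟩, Fin.ext rfl⟩
        · rintro ⟨a, rfl⟩; exact a.isLt
      rw [this, Finset.card_map, Finset.card_univ, Fintype.card_fin]
    have := Finset.card_filter_add_card_filter_not
      (s := (Finset.univ : Finset (Fin n))) (p := fun k => (k:ℕ) < m)
    rw [Finset.card_univ, Fintype.card_fin, hlt] at this
    omega
  rw [hzero]
  -- main part : reindex by Fin m × Fin m
  have hembinj : Function.Injective (fun p : Fin m × Fin m => ((p.1, Fin.castLE hmn p.2) : Fin m × Fin n)) := by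
    intro x y hxy
    rw [Prod.ext_iff] at hxy ⊢
    exact ⟨hxy.1, Fin.castLE_injective hmn hxy.2⟩
  have hmapP : Multiset.filter (fun a : Fin m × Fin n => (a.2 : ℕ) < m) Finset.univ.val
      = Multiset.map (fun p : Fin m × Fin m => ((p.1, Fin.castLE hmn p.2) : Fin m × Fin n))
          Finset.univ.val := by
    have : Finset.univ.filter (fun a : Fin m × Fin n => (a.2 : ℕ) < m)
        = Finset.map ⟨_, hembinj⟩ Finset.univ := by
      ext ⟨j, k⟩
      simp only [Finset.mem_filter, Finset.mem_univ, true_and, Finset.mem_map,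
        Function.Embedding.coeFn_mk, Prod.ext_iff]
      constructor
      · intro hk; exact ⟨(j, ⟨k, hk⟩), rfl, Fin.ext rfl⟩
      · rintro ⟨⟨a1, a2⟩, rfl, rfl⟩; exact a2.isLt
    rw [show Multiset.filter (fun a : Fin m × Fin n => (a.2 : ℕ) < m) Finset.univ.val
      = (Finset.univ.filter (fun a : Fin m × Fin n => (a.2 : ℕ) < m)).val from rfl, this,
      Finset.map_val]
    rfl
  rw [hmapP, Multiset.map_map]
  have hDD : ∀ p ∈ (Finset.univ.val : Multiset (Fin m × Fin m)),
      (dFun α ∘ fun p : Fin m × Fin m => ((p.1, Fin.castLE hmn p.2) : Fin m × Fin n)) p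
      = (fun p : Fin m × Fin m => if (p.2 : ℕ) < (p.1 : ℕ) then -(α p.1 * α p.2) else α p.1 * α p.2) p := by
    intro p _
    simp only [Function.comp_apply, dFun, Fin.coe_castLE, p.2.isLt, dif_pos, Fin.eta]
  rw [Multiset.map_congr rfl hDD]
  -- trichotomy split on Fin m × Fin m
  set DD := (fun p : Fin m × Fin m => if (p.2 : ℕ) < (p.1 : ℕ) then -(α p.1 * α p.2) else α p.1 * α p.2) with hDDdef
  have t1 : (Finset.univ.val : Multiset (Fin m × Fin m)) =
      Multiset.filter (fun p : Fin m × Fin m => p.1 < p.2) Finset.univ.val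
      + Multiset.filter (fun p : Fin m × Fin m => ¬ p.1 < p.2) Finset.univ.val :=
    (Multiset.filter_add_not _ _).symm
  have t2 : Multiset.filter (fun p : Fin m × Fin m => ¬ p.1 < p.2) (Finset.univ.val : Multiset (Fin m × Fin m)) =
      Multiset.filter (fun p : Fin m × Fin m => p.2 < p.1) Finset.univ.val
      + Multiset.filter (fun p : Fin m × Fin m => p.1 = p.2) Finset.univ.val := by
    have e1 := (Multiset.filter_add_not (fun p : Fin m × Fin m => p.2 < p.1)
      (Multiset.filter (fun p : Fin m × Fin m => ¬ p.1 < p.2) (Finset.univ.val : Multiset (Fin m × Fin m))))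
    rw [Multiset.filter_filter, Multiset.filter_filter] at e1
    rw [← e1]
    congr 1
    · apply Multiset.filter_congr
      intro p _
      rw [Fin.lt_def, Fin.lt_def]
      omega
    · apply Multiset.filter_congr
      intro p _
      rw [Fin.lt_def, Fin.lt_def, Fin.ext_iff]
      omega
  rw [t1, Multiset.map_add, t2, Multiset.map_add]
  -- identify each piece
  have plt : Multiset.map DD (Multiset.filter (fun p : Fin m × Fin m => p.1 < p.2) Finset.univ.val)
      = (Finset.univ.filter (fun p : Fin m × Fin m => p.1 < p.2)).val.map (fun p => α p.1 * α p.2) := by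
    apply Multiset.map_congr rfl
    intro p hp
    have := (Multiset.mem_filter.mp hp).2
    rw [Fin.lt_def] at this
    simp only [hDDdef, if_neg (by omega : ¬ (p.2:ℕ) < (p.1:ℕ))]
  have pgtswap : Multiset.filter (fun p : Fin m × Fin m => p.2 < p.1) (Finset.univ.val : Multiset (Fin m × Fin m))
      = Multiset.map (fun p : Fin m × Fin m => (p.2, p.1))
          ((Finset.univ.filter (fun p : Fin m × Fin m => p.1 < p.2)).val) := by
    have hsw : Function.Injective (fun p : Fin m × Fin m => (p.2, p.1)) := by
      intro x y h
      rw [Prod.ext_iff] at h ⊢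
      exact ⟨h.2, h.1⟩
    have : Finset.univ.filter (fun p : Fin m × Fin m => p.2 < p.1)
        = Finset.map ⟨_, hsw⟩ (Finset.univ.filter (fun p : Fin m × Fin m => p.1 < p.2)) := by
      ext ⟨i, j⟩
      simp only [Finset.mem_filter, Finset.mem_univ, true_and, Finset.mem_map,
        Function.Embedding.coeFn_mk, Prod.ext_iff]
      constructor
      · intro h; exact ⟨(j, i), h, rfl, rfl⟩
      · rintro ⟨⟨a1, a2⟩, h, rfl, rfl⟩; exact h
    rw [show Multiset.filter (fun p : Fin m × Fin m => p.2 < p.1) (Finset.univ.val : Multiset (Fin m × Fin m))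
      = (Finset.univ.filter (fun p : Fin m × Fin m => p.2 < p.1)).val from rfl, this, Finset.map_val]
    rfl
  have pgt : Multiset.map DD (Multiset.filter (fun p : Fin m × Fin m => p.2 < p.1) Finset.univ.val)
      = (Finset.univ.filter (fun p : Fin m × Fin m => p.1 < p.2)).val.map (fun p => -(α p.1 * α p.2)) := by
    rw [pgtswap, Multiset.map_map]
    apply Multiset.map_congr rfl
    intro p hp
    have := (Finset.mem_filter.mp hp).2
    rw [Fin.lt_def] at this
    simp only [Function.comp_apply, hDDdef, if_pos this]
    ring
  have pdiag : Multiset.map DD (Multiset.filter (fun p : Fin m × Fin m => p.1 = p.2) Finset.univ.val)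
      = Finset.univ.val.map (fun j : Fin m => α j ^ 2) := by
    have hdi : Function.Injective (fun j : Fin m => ((j, j) : Fin m × Fin m)) := by
      intro x y h; exact (Prod.ext_iff.mp h).1
    have : Finset.univ.filter (fun p : Fin m × Fin m => p.1 = p.2)
        = Finset.map ⟨_, hdi⟩ Finset.univ := by
      ext ⟨i, j⟩
      simp only [Finset.mem_filter, Finset.mem_univ, true_and, Finset.mem_map,
        Function.Embedding.coeFn_mk, Prod.ext_iff]
      constructor
      · rintro rfl; exact ⟨i, rfl, rfl⟩
      · rintro ⟨a, rfl, rfl⟩; rfl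
    rw [show Multiset.filter (fun p : Fin m × Fin m => p.1 = p.2) (Finset.univ.val : Multiset (Fin m × Fin m))
      = (Finset.univ.filter (fun p : Fin m × Fin m => p.1 = p.2)).val from rfl, this, Finset.map_val]
    show Multiset.map DD (Multiset.map (fun j : Fin m => ((j,j) : Fin m × Fin m)) Finset.univ.val) = _
    rw [Multiset.map_map]
    apply Multiset.map_congr rfl
    intro j _
    simp only [Function.comp_apply, hDDdef, if_neg (lt_irrefl _)]
    ring
  rw [plt, pgt, pdiag]
  abel

lemma u_orth (b : Fin m → Fin m → ℂ) (c' : Fin n → Fin n → ℂ)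
    (hb : ∀ i j, star (b i) ⬝ᵥ b j = if i = j then 1 else 0)
    (hc' : ∀ i j, star (c' i) ⬝ᵥ c' j = if i = j then 1 else 0)
    (a a' : Fin m × Fin n) :
    star (fun p : Fin m × Fin n => b a.1 p.1 * (starRingEnd ℂ) (c' a.2 p.2)) ⬝ᵥ
      (fun p : Fin m × Fin n => b a'.1 p.1 * (starRingEnd ℂ) (c' a'.2 p.2))
    = if a = a' then 1 else 0 := by
  have key : star (fun p : Fin m × Fin n => b a.1 p.1 * (starRingEnd ℂ) (c' a.2 p.2)) ⬝ᵥ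
      (fun p : Fin m × Fin n => b a'.1 p.1 * (starRingEnd ℂ) (c' a'.2 p.2))
      = (∑ p1, (starRingEnd ℂ) (b a.1 p1) * b a'.1 p1)
        * (∑ p2, (starRingEnd ℂ) (c' a'.2 p2) * c' a.2 p2) := by
    rw [dotProduct, Fintype.sum_prod_type, Finset.sum_mul_sum]
    apply Finset.sum_congr rfl
    intro p1 _
    apply Finset.sum_congr rfl
    intro p2 _
    simp only [Pi.star_apply, star_mul', Complex.star_def, Complex.conj_conj]
    ring
  rw [key]
  have h1 : (∑ p1, (starRingEnd ℂ) (b a.1 p1) * b a'.1 p1) = if a.1 = a'.1 then 1 else 0 := by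
    rw [← hb a.1 a'.1, dotProduct]
    rfl
  have h2 : (∑ p2, (starRingEnd ℂ) (c' a'.2 p2) * c' a.2 p2) = if a'.2 = a.2 then 1 else 0 := by
    rw [← hc' a'.2 a.2, dotProduct]
    rfl
  rw [h1, h2]
  by_cases e : a = a'
  · subst e
    simp
  · rw [if_neg e]
    by_cases k1 : a.1 = a'.1
    · have k2 : ¬ a'.2 = a.2 := fun hh => e (Prod.ext k1 hh.symm)
      rw [if_pos k1, if_neg k2, one_mul]
    · rw [if_neg k1, zero_mul]

lemma sumA (α : Fin m → ℝ) (b : Fin m → Fin m → ℂ) (c : Fin m → Fin n → ℂ)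
    (hb : ∀ i j, star (b i) ⬝ᵥ b j = if i = j then 1 else 0)
    (j : Fin m) (p2 : Fin n) :
    (∑ q1, (starRingEnd ℂ) (∑ j', (α j' : ℂ) * b j' q1 * c j' p2) * b j q1)
      = (α j : ℂ) * (starRingEnd ℂ) (c j p2) := by
  have step : ∀ q1, (starRingEnd ℂ) (∑ j', (α j' : ℂ) * b j' q1 * c j' p2) * b j q1
      = ∑ j', ((α j' : ℂ) * (starRingEnd ℂ) (c j' p2)) * ((starRingEnd ℂ) (b j' q1) * b j q1) := by
    intro q1
    rw [map_sum, Finset.sum_mul]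
    apply Finset.sum_congr rfl
    intro j' _
    simp only [_root_.map_mul, Complex.conj_ofReal]
    ring
  simp only [step]
  rw [Finset.sum_comm]
  have step2 : ∀ j', (∑ q1, ((α j' : ℂ) * (starRingEnd ℂ) (c j' p2)) * ((starRingEnd ℂ) (b j' q1) * b j q1))
      = ((α j' : ℂ) * (starRingEnd ℂ) (c j' p2)) * (if j' = j then 1 else 0) := by
    intro j'
    rw [← Finset.mul_sum]
    congr 1
    rw [← hb j' j, dotProduct]
    rfl
  simp only [step2, mul_ite, mul_one, mul_zero]
  rw [Finset.sum_ite_eq' Finset.univ j (fun j' => (α j' : ℂ) * (starRingEnd ℂ) (c j' p2))]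
  simp

lemma sumB (hmn : m ≤ n) (α : Fin m → ℝ) (b : Fin m → Fin m → ℂ) (c : Fin m → Fin n → ℂ)
    (c' : Fin n → Fin n → ℂ)
    (hc' : ∀ i j, star (c' i) ⬝ᵥ c' j = if i = j then 1 else 0)
    (hc'c : ∀ j : Fin m, c' (Fin.castLE hmn j) = c j)
    (k : Fin n) (p1 : Fin m) :
    (∑ q2, (∑ j', (α j' : ℂ) * b j' p1 * c j' q2) * (starRingEnd ℂ) (c' k q2))
      = if h : (k : ℕ) < m then (α ⟨k, h⟩ : ℂ) * b ⟨k, h⟩ p1 else 0 := by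
  have step : ∀ q2, (∑ j', (α j' : ℂ) * b j' p1 * c j' q2) * (starRingEnd ℂ) (c' k q2)
      = ∑ j', ((α j' : ℂ) * b j' p1) * ((starRingEnd ℂ) (c' k q2) * c j' q2) := by
    intro q2
    rw [Finset.sum_mul]
    apply Finset.sum_congr rfl
    intro j' _
    ring
  simp only [step]
  rw [Finset.sum_comm]
  have step2 : ∀ j', (∑ q2, ((α j' : ℂ) * b j' p1) * ((starRingEnd ℂ) (c' k q2) * c j' q2))
      = ((α j' : ℂ) * b j' p1) * (if k = Fin.castLE hmn j' then 1 else 0) := by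
    intro j'
    rw [← Finset.mul_sum]
    congr 1
    rw [← hc' k (Fin.castLE hmn j'), dotProduct, hc'c j']
    rfl
  simp only [step2, mul_ite, mul_one, mul_zero]
  by_cases h : (k : ℕ) < m
  · rw [dif_pos h]
    have hcond : ∀ j' : Fin m, (k = Fin.castLE hmn j') ↔ (j' = ⟨k, h⟩) := by
      intro j'
      rw [Fin.ext_iff, Fin.ext_iff]
      simp only [Fin.coe_castLE]
      omega
    simp only [hcond]
    rw [Finset.sum_ite_eq' Finset.univ (⟨k, h⟩ : Fin m) (fun j' => (α j' : ℂ) * b j' p1)]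
    simp
  · rw [dif_neg h]
    apply Finset.sum_eq_zero
    intro j' _
    rw [if_neg]
    · intro he
      rw [Fin.ext_iff] at he
      simp only [Fin.coe_castLE] at he
      omega

lemma mulVec_u (hmn : m ≤ n) (α : Fin m → ℝ)
    (b : Fin m → Fin m → ℂ) (c : Fin m → Fin n → ℂ) (c' : Fin n → Fin n → ℂ)
    (hb : ∀ i j, star (b i) ⬝ᵥ b j = if i = j then 1 else 0)
    (hc' : ∀ i j, star (c' i) ⬝ᵥ c' j = if i = j then 1 else 0)
    (hc'c : ∀ j : Fin m, c' (Fin.castLE hmn j) = c j)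
    (v : Fin m × Fin n → ℂ)
    (hv : v = fun p => ∑ j, (α j : ℂ) * b j p.1 * c j p.2)
    (j : Fin m) (k : Fin n) :
    (partialTranspose (vecMulVec v (star v))) *ᵥ
        (fun p : Fin m × Fin n => b j p.1 * (starRingEnd ℂ) (c' k p.2))
      = if h : (k : ℕ) < m then
          (fun p : Fin m × Fin n => ((α j : ℂ) * (α ⟨k, h⟩ : ℂ))
            * (b ⟨k, h⟩ p.1 * (starRingEnd ℂ) (c' (Fin.castLE hmn j) p.2)))
        else 0 := by
  have hWent : ∀ p q : Fin m × Fin n,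
      partialTranspose (vecMulVec v (star v)) p q
        = v (p.1, q.2) * (starRingEnd ℂ) (v (q.1, p.2)) := by
    intro p q
    simp [partialTranspose, vecMulVec_apply, Complex.star_def]
  funext p
  show (∑ q, partialTranspose (vecMulVec v (star v)) p q * (b j q.1 * (starRingEnd ℂ) (c' k q.2))) = _
  have hfactor : (∑ q : Fin m × Fin n, partialTranspose (vecMulVec v (star v)) p q
        * (b j q.1 * (starRingEnd ℂ) (c' k q.2)))
      = (∑ q1, (starRingEnd ℂ) (v (q1, p.2)) * b j q1)
        * (∑ q2, v (p.1, q2) * (starRingEnd ℂ) (c' k q2)) := by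
    rw [Fintype.sum_prod_type, Finset.sum_mul_sum]
    apply Finset.sum_congr rfl
    intro q1 _
    apply Finset.sum_congr rfl
    intro q2 _
    rw [hWent p (q1, q2)]
    ring
  rw [hfactor]
  have hA : (∑ q1, (starRingEnd ℂ) (v (q1, p.2)) * b j q1)
      = (α j : ℂ) * (starRingEnd ℂ) (c j p.2) := by
    subst hv
    exact sumA α b c hb j p.2
  have hB : (∑ q2, v (p.1, q2) * (starRingEnd ℂ) (c' k q2))
      = if h : (k : ℕ) < m then (α ⟨k, h⟩ : ℂ) * b ⟨k, h⟩ p.1 else 0 := by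
    subst hv
    exact sumB hmn α b c c' hc' hc'c k p.1
  rw [hA, hB]
  by_cases h : (k : ℕ) < m
  · rw [dif_pos h, dif_pos h]
    rw [hc'c j]
    ring
  · rw [dif_neg h, dif_neg h, mul_zero]
    rfl


lemma mulVec_w (hmn : m ≤ n) (α : Fin m → ℝ)
    (b : Fin m → Fin m → ℂ) (c : Fin m → Fin n → ℂ) (c' : Fin n → Fin n → ℂ)
    (hb : ∀ i j, star (b i) ⬝ᵥ b j = if i = j then 1 else 0)
    (hc' : ∀ i j, star (c' i) ⬝ᵥ c' j = if i = j then 1 else 0)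
    (hc'c : ∀ j : Fin m, c' (Fin.castLE hmn j) = c j)
    (v : Fin m × Fin n → ℂ)
    (hv : v = fun p => ∑ j, (α j : ℂ) * b j p.1 * c j p.2)
    (a : Fin m × Fin n) :
    (partialTranspose (vecMulVec v (star v))) *ᵥ
        (uFun b c' a + sgFun a • uFun b c' (sigmaFun hmn a))
      = fun p => ((dFun α a : ℝ) : ℂ)
          * (uFun b c' a p + sgFun a * uFun b c' (sigmaFun hmn a) p) := by
  obtain ⟨j, k⟩ := a
  rw [mulVec_add, mulVec_smul]
  by_cases h : (k : ℕ) < m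
  · have hs : sigmaFun hmn (j, k) = ((⟨k, h⟩ : Fin m), Fin.castLE hmn j) := dif_pos h
    have h1 := mulVec_u hmn α b c c' hb hc' hc'c v hv j k
    rw [dif_pos h] at h1
    have h1' : partialTranspose (vecMulVec v (star v)) *ᵥ uFun b c' (j, k)
        = fun p => ((α j : ℂ) * (α ⟨k, h⟩ : ℂ)) * uFun b c' ((⟨k, h⟩ : Fin m), Fin.castLE hmn j) p :=
      h1
    have h2 := mulVec_u hmn α b c c' hb hc' hc'c v hv (⟨k, h⟩ : Fin m) (Fin.castLE hmn j)
    rw [dif_pos (show ((Fin.castLE hmn j : Fin n) : ℕ) < m from j.isLt)] at h2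
    have h2' : partialTranspose (vecMulVec v (star v)) *ᵥ uFun b c' ((⟨k, h⟩ : Fin m), Fin.castLE hmn j)
        = fun p => ((α ⟨k, h⟩ : ℂ) * (α j : ℂ)) * uFun b c' (j, k) p := h2
    rcases lt_trichotomy (j : ℕ) (k : ℕ) with ht | ht | ht
    · have hsg : sgFun ((j, k) : Fin m × Fin n) = 1 := by
        unfold sgFun; rw [if_pos h, if_pos ht]
      have hd : dFun α ((j, k) : Fin m × Fin n) = α j * α ⟨k, h⟩ := by
        unfold dFun; rw [dif_pos h, if_neg (by show ¬ (k:ℕ) < (j:ℕ); omega)]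
      rw [hs, h1', h2', hsg, hd]
      funext p
      simp only [Pi.add_apply, Pi.smul_apply, smul_eq_mul, Complex.ofReal_mul]
      ring
    · have hfix : sigmaFun hmn ((j, k) : Fin m × Fin n) = (j, k) :=
        (fixed_iff hmn (j, k) h).mpr ht
      have hsg : sgFun ((j, k) : Fin m × Fin n) = 0 := sg_of_fixed hmn _ hfix
      have hd : dFun α ((j, k) : Fin m × Fin n) = α j * α ⟨k, h⟩ := by
        unfold dFun; rw [dif_pos h, if_neg (by show ¬ (k:ℕ) < (j:ℕ); omega)]
      rw [← hs, hfix] at h1'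
      rw [hfix, hsg, h1', hd]
      funext p
      simp only [Pi.add_apply, Pi.smul_apply, smul_eq_mul, zero_mul, add_zero, zero_smul,
        Pi.zero_apply, Complex.ofReal_mul]
    · have hsg : sgFun ((j, k) : Fin m × Fin n) = -1 := by
        unfold sgFun; rw [if_pos h, if_neg (by show ¬ (j:ℕ) < (k:ℕ); omega), if_pos ht]
      have hd : dFun α ((j, k) : Fin m × Fin n) = -(α j * α ⟨k, h⟩) := by
        unfold dFun; rw [dif_pos h, if_pos (show ((j,k).2:ℕ) < ((j,k).1:ℕ) from ht)]
      rw [hs, h1', h2', hsg, hd]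
      funext p
      simp only [Pi.add_apply, Pi.smul_apply, smul_eq_mul, Complex.ofReal_neg, Complex.ofReal_mul]
      ring
  · have hs : sigmaFun hmn ((j, k) : Fin m × Fin n) = (j, k) := dif_neg h
    have hsg : sgFun ((j, k) : Fin m × Fin n) = 0 := sg_of_fixed hmn _ hs
    have hd : dFun α ((j, k) : Fin m × Fin n) = 0 := by unfold dFun; rw [dif_neg h]
    have h1 := mulVec_u hmn α b c c' hb hc' hc'c v hv j k
    rw [dif_neg h] at h1
    have h1' : partialTranspose (vecMulVec v (star v)) *ᵥ uFun b c' (j, k) = 0 := h1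
    rw [hs, hsg, h1', hd]
    funext p
    simp

lemma gram (hmn : m ≤ n) (b : Fin m → Fin m → ℂ) (c' : Fin n → Fin n → ℂ)
    (hb : ∀ i j, star (b i) ⬝ᵥ b j = if i = j then 1 else 0)
    (hc' : ∀ i j, star (c' i) ⬝ᵥ c' j = if i = j then 1 else 0) :
    (Matrix.of fun p a : Fin m × Fin n =>
        uFun b c' a p + sgFun a * uFun b c' (sigmaFun hmn a) p)ᴴ
    * (Matrix.of fun p a : Fin m × Fin n =>
        uFun b c' a p + sgFun a * uFun b c' (sigmaFun hmn a) p)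
    = diagonal (fun a => 1 + sgFun a * sgFun a) := by
  classical
  ext a a'
  rw [Matrix.mul_apply]
  have dot : ∀ x y : Fin m × Fin n,
      (∑ p, (starRingEnd ℂ) (uFun b c' x p) * uFun b c' y p) = if x = y then 1 else 0 := by
    intro x y
    have := u_orth b c' hb hc' x y
    simpa [dotProduct, uFun, Complex.star_def] using this
  have expand : ∀ p, (Matrix.of fun p a : Fin m × Fin n =>
        uFun b c' a p + sgFun a * uFun b c' (sigmaFun hmn a) p)ᴴ a p
      * (Matrix.of fun p a : Fin m × Fin n =>
        uFun b c' a p + sgFun a * uFun b c' (sigmaFun hmn a) p) p a'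
      = (starRingEnd ℂ) (uFun b c' a p) * uFun b c' a' p
        + sgFun a' * ((starRingEnd ℂ) (uFun b c' a p) * uFun b c' (sigmaFun hmn a') p)
        + sgFun a * ((starRingEnd ℂ) (uFun b c' (sigmaFun hmn a) p) * uFun b c' a' p)
        + sgFun a * sgFun a' * ((starRingEnd ℂ) (uFun b c' (sigmaFun hmn a) p)
            * uFun b c' (sigmaFun hmn a') p) := by
    intro p
    rw [conjTranspose_apply, Matrix.of_apply, Matrix.of_apply]
    simp only [Complex.star_def, map_add, _root_.map_mul, sg_conj]
    ring
  rw [Finset.sum_congr rfl (fun p _ => expand p)]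
  rw [Finset.sum_add_distrib, Finset.sum_add_distrib, Finset.sum_add_distrib,
    ← Finset.mul_sum, ← Finset.mul_sum, ← Finset.mul_sum, dot, dot, dot, dot]
  by_cases hab : a = a'
  · subst hab
    rw [diagonal_apply_eq, if_pos rfl, if_pos rfl]
    by_cases hfix : sigmaFun hmn a = a
    · rw [sg_of_fixed hmn a hfix]
      simp
    · rw [if_neg (fun hh => hfix hh.symm), if_neg hfix]
      simp
  · rw [diagonal_apply_ne _ hab, if_neg hab,
      if_neg (fun hh => hab (sigma_inj hmn hh))]
    by_cases hb2 : sigmaFun hmn a = a'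
    · have ha2 : a = sigmaFun hmn a' := by
        rw [← hb2, sigma_sigma]
      have hsg' : sgFun a' = - sgFun a := by rw [← hb2, sg_sigma]
      rw [if_pos hb2, if_pos ha2, hsg']
      ring
    · have ha2 : ¬ a = sigmaFun hmn a' := by
        intro hh
        apply hb2
        rw [hh, sigma_sigma]
      rw [if_neg hb2, if_neg ha2]
      simp

lemma detV_isUnit (hmn : m ≤ n) (b : Fin m → Fin m → ℂ) (c' : Fin n → Fin n → ℂ)
    (hb : ∀ i j, star (b i) ⬝ᵥ b j = if i = j then 1 else 0)
    (hc' : ∀ i j, star (c' i) ⬝ᵥ c' j = if i = j then 1 else 0) :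
    IsUnit (Matrix.of fun p a : Fin m × Fin n =>
        uFun b c' a p + sgFun a * uFun b c' (sigmaFun hmn a) p).det := by
  classical
  have hg := congrArg Matrix.det (gram hmn b c' hb hc')
  rw [Matrix.det_mul, det_diagonal] at hg
  have hne : (∏ a : Fin m × Fin n, (1 + sgFun a * sgFun a)) ≠ 0 := by
    apply Finset.prod_ne_zero_iff.mpr
    intro a _
    by_cases hfix : sigmaFun hmn a = a
    · rw [sg_of_fixed hmn a hfix]
      norm_num
    · rw [sg_sq hmn a, if_neg hfix]
      norm_num
  rw [isUnit_iff_ne_zero]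
  intro h0
  rw [h0, mul_zero] at hg
  exact hne hg.symm

end Aux

theorem stmt_0 {m n : ℕ} (hmn : m ≤ n)
    (α : Fin m → ℝ) (hα : Antitone α) (hα0 : ∀ j, 0 ≤ α j)
    (b : Fin m → Fin m → ℂ) (c : Fin m → Fin n → ℂ)
    (hb : ∀ i j, star (b i) ⬝ᵥ b j = if i = j then 1 else 0)
    (hc : ∀ i j, star (c i) ⬝ᵥ c j = if i = j then 1 else 0)
    (v : Fin m × Fin n → ℂ)
    (hv : v = fun p => ∑ j, (α j : ℂ) * b j p.1 * c j p.2) :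
    ∃ hW : (partialTranspose (vecMulVec v (star v))).IsHermitian,
      Finset.univ.val.map hW.eigenvalues =
        Finset.univ.val.map (fun j : Fin m => α j ^ 2)
        + (Finset.univ.filter (fun p : Fin m × Fin m => p.1 < p.2)).val.map
            (fun p => α p.1 * α p.2)
        + (Finset.univ.filter (fun p : Fin m × Fin m => p.1 < p.2)).val.map
            (fun p => -(α p.1 * α p.2))
        + Multiset.replicate (m * (n - m)) 0 := by
  classical
  have hW : (partialTranspose (vecMulVec v (star v))).IsHermitian := by
    show (partialTranspose (vecMulVec v (star v)))ᴴ = partialTranspose (vecMulVec v (star v))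
    ext p q
    simp only [conjTranspose_apply, partialTranspose, Matrix.of_apply, vecMulVec_apply,
      Pi.star_apply, Complex.star_def, _root_.map_mul, Complex.conj_conj]
    ring
  refine ⟨hW, ?_⟩
  obtain ⟨c', hc', hc'c⟩ := extend_orthonormal hmn c hc
  set V : Matrix (Fin m × Fin n) (Fin m × Fin n) ℂ :=
    Matrix.of (fun p a : Fin m × Fin n =>
      uFun b c' a p + sgFun a * uFun b c' (sigmaFun hmn a) p) with hVdef
  have hWV : partialTranspose (vecMulVec v (star v)) * V
      = V * diagonal (fun a => ((dFun α a : ℝ) : ℂ)) := by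
    ext p a
    rw [Matrix.mul_apply, Matrix.mul_diagonal]
    have hcol := congrFun (mulVec_w hmn α b c c' hb hc' hc'c v hv a) p
    have hexp : (partialTranspose (vecMulVec v (star v)) *ᵥ
        (uFun b c' a + sgFun a • uFun b c' (sigmaFun hmn a))) p
        = ∑ q, partialTranspose (vecMulVec v (star v)) p q * V q a := by
      rw [Matrix.mulVec, dotProduct]
      apply Finset.sum_congr rfl
      intro q _
      simp [hVdef, smul_eq_mul]
    rw [← hexp, hcol]
    simp only [hVdef, Matrix.of_apply]
    ring
  have hgram := gram hmn b c' hb hc'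
  have hdet : IsUnit V.det := detV_isUnit hmn b c' hb hc'
  have hchar := charpoly_of_similar (partialTranspose (vecMulVec v (star v)))
    (diagonal (fun a => ((dFun α a : ℝ) : ℂ))) V hdet hWV
  rw [charpoly_hermitian _ hW, charpoly_diagonal'] at hchar
  have hmult : Multiset.map (fun a => ((hW.eigenvalues a : ℝ) : ℂ)) Finset.univ.val
      = Multiset.map (fun a : Fin m × Fin n => ((dFun α a : ℝ) : ℂ)) Finset.univ.val := by
    have r1 := Polynomial.roots_multiset_prod_X_sub_C
      (Multiset.map (fun a => ((hW.eigenvalues a : ℝ) : ℂ)) Finset.univ.val)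
    have r2 := Polynomial.roots_multiset_prod_X_sub_C
      (Multiset.map (fun a : Fin m × Fin n => ((dFun α a : ℝ) : ℂ)) Finset.univ.val)
    rw [← r1, ← r2]
    congr 1
    rw [Multiset.map_map, Multiset.map_map]
    rw [← Finset.prod_eq_multiset_prod, ← Finset.prod_eq_multiset_prod]
    exact hchar
  have hreal : Finset.univ.val.map hW.eigenvalues = Finset.univ.val.map (dFun (n := n) α) := by
    apply Multiset.map_injective (f := (fun r : ℝ => (r : ℂ))) Complex.ofReal_injective
    rw [Multiset.map_map, Multiset.map_map]
    exact hmult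
  rw [hreal, multiset_dFun hmn α]
end
end

section
/- If ρ ∈ M_m(ℂ) ⊗ M_n(ℂ) is separable, i.e., ρ = Σⱼ Xⱼ ⊗ Yⱼ with all Xⱼ ∈ M_m(ℂ), Yⱼ ∈ M_n(ℂ) positive semidefinite, then ρ^Γ is positive semidefinite. -/
open Matrix BigOperators
open scoped Kronecker ComplexOrder

noncomputable section

lemma kron_conjTranspose {m n : ℕ} (B : Matrix (Fin m) (Fin m) ℂ)
    (C : Matrix (Fin n) (Fin n) ℂ) : (B ⊗ₖ C)ᴴ = Bᴴ ⊗ₖ Cᴴ := by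
  ext p q
  simp [kroneckerMap_apply, conjTranspose_apply, mul_comm]

lemma kron_posSemidef {m n : ℕ} {B : Matrix (Fin m) (Fin m) ℂ}
    {C : Matrix (Fin n) (Fin n) ℂ} (hB : B.PosSemidef) (hC : C.PosSemidef) :
    (B ⊗ₖ C).PosSemidef := by
  have key : ∀ {p : ℕ} {A : Matrix (Fin p) (Fin p) ℂ}, A.PosSemidef →
      ∃ D : Matrix (Fin p) (Fin p) ℂ, A = Dᴴ * D := by
    intro p A hA
    open scoped MatrixOrder in
    obtain ⟨D, hD, -, hDA⟩ :=
      CFC.exists_sqrt_of_isSelfAdjoint_of_quasispectrumRestricts hA.isHermitian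
        (QuasispectrumRestricts.nnreal_of_nonneg hA.nonneg)
    exact ⟨D, by rw [← hDA, ← star_eq_conjTranspose, hD.star_eq]⟩
  obtain ⟨B', hB'⟩ := key hB
  obtain ⟨C', hC'⟩ := key hC
  rw [hB', hC', mul_kronecker_mul, ← kron_conjTranspose]
  exact posSemidef_conjTranspose_mul_self _

theorem stmt_2 {m n : ℕ} (ρ : Matrix (Fin m × Fin n) (Fin m × Fin n) ℂ)
    (k : ℕ) (X : Fin k → Matrix (Fin m) (Fin m) ℂ) (Y : Fin k → Matrix (Fin n) (Fin n) ℂ)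
    (hX : ∀ j, (X j).PosSemidef) (hY : ∀ j, (Y j).PosSemidef)
    (hρ : ρ = ∑ j, X j ⊗ₖ Y j) :
    (partialTranspose ρ).PosSemidef := by
  have hpt : partialTranspose ρ = ∑ j, X j ⊗ₖ (Y j)ᵀ := by
    subst hρ
    ext p q
    simp [partialTranspose, kroneckerMap_apply, Matrix.sum_apply]
  rw [hpt]
  exact Finset.sum_induction _ _ (fun a b ha hb => ha.add hb) (PosSemidef.zero)
    fun j _ => kron_posSemidef (hX j) ((hY j).transpose)
end
end

section
/- For any real numbers μ₁ ≥ μ₂ ≥ μ₃ ≥ 0 ≥ μ₄ satisfying μ₄ ≥ −μ₂ and μ₄ ≥ −√(μ₁μ₃), with μ₃ > 0, the 4×4 matrix W = P^Γ + γ₁ E₁₁ + (γ₂/2) S, where α₂ = √μ₃, α₁ = −μ₄/α₂, P is the rank-1 matrix with entries P₁₁ = α₁², P₁₄ = P₄₁ = α₁α₂, P₄₄ = α₂², γ₁ = μ₁ − μ₄²/μ₃, γ₂ = μ₂ + μ₄, E₁₁ is the (1,1) matrix unit, and S has entries S₂₂ = S₂₃ = S₃₂ = S₃₃ = 1 and zeros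 elsewhere, has eigenvalues μ₁, μ₂, μ₃, μ₄ with eigenvectors |0⟩⊗|0⟩, |0⟩⊗|1⟩+|1⟩⊗|0⟩, |1⟩⊗|1⟩, and |0⟩⊗|1⟩−|1⟩⊗|0⟩ respectively. -/
open Matrix BigOperators
open scoped ComplexOrder

noncomputable section

theorem stmt_4 (μ₁ μ₂ μ₃ μ₄ α₁ α₂ γ₁ γ₂ : ℝ)
    (h12 : μ₂ ≤ μ₁) (h23 : μ₃ ≤ μ₂) (h3 : 0 < μ₃) (h4 : μ₄ ≤ 0)
    (hb : -μ₂ ≤ μ₄) (hc : -Real.sqrt (μ₁ * μ₃) ≤ μ₄)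
    (hα₂ : α₂ = Real.sqrt μ₃) (hα₁ : α₁ = -μ₄ / α₂)
    (hγ₁ : γ₁ = μ₁ - μ₄ ^ 2 / μ₃) (hγ₂ : γ₂ = μ₂ + μ₄)
    (P E S W : Matrix (Fin 2 × Fin 2) (Fin 2 × Fin 2) ℂ)
    (hP : P = Matrix.of fun p q =>
      if p = (0, 0) ∧ q = (0, 0) then ((α₁ ^ 2 : ℝ) : ℂ)
      else if p = (0, 0) ∧ q = (1, 1) then ((α₁ * α₂ : ℝ) : ℂ)
      else if p = (1, 1) ∧ q = (0, 0) then ((α₁ * α₂ : ℝ) : ℂ)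
      else if p = (1, 1) ∧ q = (1, 1) then ((α₂ ^ 2 : ℝ) : ℂ) else 0)
    (hE : E = Matrix.of fun p q => if p = (0, 0) ∧ q = (0, 0) then (1 : ℂ) else 0)
    (hS : S = Matrix.of fun p q =>
      if (p = (0, 1) ∨ p = (1, 0)) ∧ (q = (0, 1) ∨ q = (1, 0)) then (1 : ℂ) else 0)
    (hW : W = partialTranspose P + (γ₁ : ℂ) • E + ((γ₂ / 2 : ℝ) : ℂ) • S)
    (e₁ e₂ e₃ e₄ : Fin 2 × Fin 2 → ℂ)
    (he₁ : e₁ = fun p => if p = (0, 0) then 1 else 0)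
    (he₂ : e₂ = fun p => if p = (0, 1) ∨ p = (1, 0) then 1 else 0)
    (he₃ : e₃ = fun p => if p = (1, 1) then 1 else 0)
    (he₄ : e₄ = fun p => if p = (0, 1) then 1 else if p = (1, 0) then -1 else 0) :
    W *ᵥ e₁ = (μ₁ : ℂ) • e₁ ∧ W *ᵥ e₂ = (μ₂ : ℂ) • e₂ ∧
      W *ᵥ e₃ = (μ₃ : ℂ) • e₃ ∧ W *ᵥ e₄ = (μ₄ : ℂ) • e₄ := by
  have hs : Real.sqrt μ₃ ^ 2 = μ₃ := Real.sq_sqrt h3.le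
  have hsne : Real.sqrt μ₃ ≠ 0 := by positivity
  have k1 : α₂ ^ 2 = μ₃ := by rw [hα₂]; exact hs
  have k2 : α₁ * α₂ = -μ₄ := by
    rw [hα₁, hα₂]; field_simp
  have k3 : γ₁ + α₁ ^ 2 = μ₁ := by
    rw [hγ₁, hα₁, hα₂, div_pow, hs]
    ring
  have c1 : (α₂ : ℂ) ^ 2 = (μ₃ : ℂ) := by exact_mod_cast congrArg Complex.ofReal k1
  have c2 : (α₁ : ℂ) * (α₂ : ℂ) = -(μ₄ : ℂ) := by exact_mod_cast congrArg Complex.ofReal k2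
  have c3 : (γ₁ : ℂ) + (α₁ : ℂ) ^ 2 = (μ₁ : ℂ) := by exact_mod_cast congrArg Complex.ofReal k3
  subst hP hE hS hW he₁ he₂ he₃ he₄
  refine ⟨?_, ?_, ?_, ?_⟩ <;>
  · funext p
    obtain ⟨i, j⟩ := p
    fin_cases i <;> fin_cases j <;>
    · simp only [Matrix.mulVec, dotProduct, Fintype.sum_prod_type, Fin.sum_univ_two,
        partialTranspose, Matrix.add_apply, Matrix.smul_apply, Matrix.of_apply,
        Prod.mk.injEq, Pi.smul_apply, smul_eq_mul, hγ₂]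
      norm_num
      all_goals first
        | linear_combination c1
        | linear_combination c2
        | linear_combination (-1 : ℂ) * c2
        | linear_combination c3
end
end

section
/- A block-positive matrix W ∈ M₂(ℂ) ⊗ M₂(ℂ) has at most one negative eigenvalue. More generally, if W = X^Γ + Y with X, Y ∈ M₂(ℂ) ⊗ M₂(ℂ) positive semidefinite and X of rank 1, then W has at most one negative eigenvalue. -/
open Matrix BigOperators
open scoped ComplexOrder
noncomputable section

def BlockPositive {m n : ℕ} (W : Matrix (Fin m × Fin n) (Fin m × Fin n) ℂ) : Prop :=
  ∀ (a : Fin m → ℂ) (b : Fin n → ℂ),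
    0 ≤ star (fun p : Fin m × Fin n => a p.1 * b p.2) ⬝ᵥ
          W *ᵥ (fun p : Fin m × Fin n => a p.1 * b p.2)

lemma quad_root (A B C : ℂ) :
    ∃ s t : ℂ, ¬(s = 0 ∧ t = 0) ∧ A*s^2 + B*s*t + C*t^2 = 0 := by
  by_cases hA : A = 0
  · exact ⟨1, 0, by simp, by simp [hA]⟩
  · obtain ⟨d, hd⟩ := IsAlgClosed.exists_pow_nat_eq (B^2 - 4*A*C) (n := 2) two_pos
    refine ⟨(-B + d)/(2*A), 1, by simp, ?_⟩
    field_simp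
    ring_nf
    linear_combination hd

lemma rank1_factor (M : Matrix (Fin 2) (Fin 2) ℂ)
    (h : M 0 0 * M 1 1 - M 0 1 * M 1 0 = 0) :
    ∃ a b : Fin 2 → ℂ, ∀ i j, M i j = a i * b j := by
  by_cases h00 : M 0 0 ≠ 0
  · refine ⟨![M 0 0, M 1 0], ![1, M 0 1 / M 0 0], fun i j => ?_⟩
    fin_cases i <;> fin_cases j <;> simp <;> field_simp <;> linear_combination h
  · push_neg at h00
    by_cases h01 : M 0 1 ≠ 0
    · refine ⟨![M 0 1, M 1 1], ![M 0 0 / M 0 1, 1], fun i j => ?_⟩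
      fin_cases i <;> fin_cases j <;> simp <;> field_simp <;> linear_combination -h
    · push_neg at h01
      refine ⟨![0, 1], ![M 1 0, M 1 1], fun i j => ?_⟩
      fin_cases i <;> fin_cases j <;> simp [h00, h01]

lemma part1 (W : Matrix (Fin 2 × Fin 2) (Fin 2 × Fin 2) ℂ) (hBP : BlockPositive W)
    (hW : W.IsHermitian) :
    (Finset.univ.filter fun i => hW.eigenvalues i < 0).card ≤ 1 := by
  by_contra hcard
  push_neg at hcard
  obtain ⟨i, hi, j, hj, hij⟩ := Finset.one_lt_card.mp hcard
  rw [Finset.mem_filter] at hi hj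
  set u : (Fin 2 × Fin 2) → ℂ := ⇑(hW.eigenvectorBasis i) with hu_def
  set v : (Fin 2 × Fin 2) → ℂ := ⇑(hW.eigenvectorBasis j) with hv_def
  have hu : W *ᵥ u = ((hW.eigenvalues i : ℝ) : ℂ) • u := by
    convert hW.mulVec_eigenvectorBasis i using 1
    exact Complex.coe_smul _ _
  have hv : W *ᵥ v = ((hW.eigenvalues j : ℝ) : ℂ) • v := by
    convert hW.mulVec_eigenvectorBasis j using 1
    exact Complex.coe_smul _ _
  have h_on := hW.eigenvectorBasis.orthonormal
  rw [orthonormal_iff_ite] at h_on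
  have hdot : ∀ k l, star (⇑(hW.eigenvectorBasis k)) ⬝ᵥ ⇑(hW.eigenvectorBasis l)
      = if k = l then 1 else 0 := by
    intro k l
    have := h_on k l
    rwa [EuclideanSpace.inner_eq_star_dotProduct, dotProduct_comm] at this
  have huu : star u ⬝ᵥ u = 1 := by simpa using hdot i i
  have huv : star u ⬝ᵥ v = 0 := by simpa [hij] using hdot i j
  have hvu : star v ⬝ᵥ u = 0 := by simpa [(Ne.symm hij)] using hdot j i
  have hvv : star v ⬝ᵥ v = 1 := by simpa using hdot j j
  obtain ⟨s, t, hst, hq⟩ := quad_root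
    (u (0,0) * u (1,1) - u (0,1) * u (1,0))
    (u (0,0) * v (1,1) + v (0,0) * u (1,1) - u (0,1) * v (1,0) - v (0,1) * u (1,0))
    (v (0,0) * v (1,1) - v (0,1) * v (1,0))
  set M : Matrix (Fin 2) (Fin 2) ℂ := Matrix.of fun k l => s * u (k, l) + t * v (k, l) with hM
  obtain ⟨a, b, hab⟩ := rank1_factor M (by simp only [hM, Matrix.of_apply]; linear_combination hq)
  have hw : (fun p : Fin 2 × Fin 2 => a p.1 * b p.2) = s • u + t • v := by
    funext p
    have := (hab p.1 p.2).symm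
    simpa [hM] using this
  have key := hBP a b
  rw [hw] at key
  have hval : star (s • u + t • v) ⬝ᵥ W *ᵥ (s • u + t • v)
      = ((Complex.normSq s * hW.eigenvalues i + Complex.normSq t * hW.eigenvalues j : ℝ) : ℂ) := by
    rw [mulVec_add, mulVec_smul, mulVec_smul, hu, hv]
    simp only [star_add, star_smul, add_dotProduct, dotProduct_add, smul_dotProduct,
      dotProduct_smul, smul_eq_mul, huu, huv, hvu, hvv, smul_smul]
    push_cast
    simp only [Complex.star_def]
    linear_combination (hW.eigenvalues i : ℂ) * Complex.mul_conj s
      + (hW.eigenvalues j : ℂ) * Complex.mul_conj t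
  rw [hval] at key
  rw [Complex.zero_le_real] at key
  have hs2 : 0 < Complex.normSq s ∨ 0 < Complex.normSq t := by
    rcases not_and_or.mp hst with h | h
    · exact Or.inl (Complex.normSq_pos.mpr h)
    · exact Or.inr (Complex.normSq_pos.mpr h)
  have h1 := hi.2
  have h2 := hj.2
  rcases hs2 with h | h <;>
    nlinarith [Complex.normSq_nonneg s, Complex.normSq_nonneg t]

lemma pt_quadform (X : Matrix (Fin 2 × Fin 2) (Fin 2 × Fin 2) ℂ) (a b : Fin 2 → ℂ) :
    star (fun p : Fin 2 × Fin 2 => a p.1 * b p.2) ⬝ᵥ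
      partialTranspose X *ᵥ (fun p : Fin 2 × Fin 2 => a p.1 * b p.2)
    = star (fun p : Fin 2 × Fin 2 => a p.1 * star (b p.2)) ⬝ᵥ
      X *ᵥ (fun p : Fin 2 × Fin 2 => a p.1 * star (b p.2)) := by
  simp only [dotProduct, mulVec, partialTranspose, Matrix.of_apply, Pi.star_apply,
    Fintype.sum_prod_type, Fin.sum_univ_two, star_mul', Finset.mul_sum, Complex.star_def,
    _root_.map_mul, Complex.conj_conj]
  ring

lemma bp_of_decomp (W X Y : Matrix (Fin 2 × Fin 2) (Fin 2 × Fin 2) ℂ)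
    (hX : X.PosSemidef) (hY : Y.PosSemidef) (hdef : W = partialTranspose X + Y) :
    BlockPositive W := by
  intro a b
  rw [hdef, add_mulVec, dotProduct_add]
  have h1 := hX.dotProduct_mulVec_nonneg (fun p : Fin 2 × Fin 2 => a p.1 * star (b p.2))
  have h2 := hY.dotProduct_mulVec_nonneg (fun p : Fin 2 × Fin 2 => a p.1 * b p.2)
  rw [← pt_quadform X a b] at h1
  exact add_nonneg h1 h2

theorem stmt_6 :
    (∀ W : Matrix (Fin 2 × Fin 2) (Fin 2 × Fin 2) ℂ, BlockPositive W →
      ∀ hW : W.IsHermitian,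
        (Finset.univ.filter fun i => hW.eigenvalues i < 0).card ≤ 1) ∧
    (∀ W X Y : Matrix (Fin 2 × Fin 2) (Fin 2 × Fin 2) ℂ, X.PosSemidef → Y.PosSemidef →
      X.rank = 1 → W = partialTranspose X + Y →
      ∀ hW : W.IsHermitian,
        (Finset.univ.filter fun i => hW.eigenvalues i < 0).card ≤ 1) := by
  constructor
  · exact part1
  · intro W X Y hX hY _ hdef hW
    exact part1 W (bp_of_decomp W X Y hX hY hdef) hW
end
end

section
/- The set σ(BP₂,₂) of spectra of block-positive matrices in M₂(ℂ) ⊗ M₂(ℂ) is not convex: both (4,2,1,−2) and (4,2,−2,1) lie in σ(BP₂,₂), but their average (4,2,−1/2,−1/2) does not, since every block-positive 2⊗2 matrix has at most one negative eigenvalue. -/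
open Matrix BigOperators
open scoped ComplexOrder

noncomputable section

/-- The set of spectra (as unordered assignments of eigenvalues to indices)
of block-positive matrices on `ℂ² ⊗ ℂ²`. -/
def spectraBP22 : Set ((Fin 2 × Fin 2) → ℝ) :=
  {μ | ∃ W : Matrix (Fin 2 × Fin 2) (Fin 2 × Fin 2) ℂ, BlockPositive W ∧
    ∃ hW : W.IsHermitian,
      Finset.univ.val.map hW.eigenvalues = Finset.univ.val.map μ}

open Polynomial

/-! ### Auxiliary lemmas -/

lemma aux_charpoly_diag {n : Type*} [Fintype n] [DecidableEq n] (d : n → ℂ) :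
    (Matrix.diagonal d).charpoly = ∏ i, (X - C (d i)) := by
  have h : charmatrix (Matrix.diagonal d) = Matrix.diagonal (fun i => X - C (d i)) := by
    ext i j
    rcases eq_or_ne i j with rfl | h
    · simp [charmatrix_apply_eq]
    · simp [charmatrix_apply_ne _ _ _ h, Matrix.diagonal_apply_ne _ h]
  rw [Matrix.charpoly, h, Matrix.det_diagonal]

lemma aux_charpoly_conj {n : Type*} [Fintype n] [DecidableEq n] (U D : Matrix n n ℂ)
    (hU : U ∈ Matrix.unitaryGroup n ℂ) :
    (U * D * star U).charpoly = D.charpoly := by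
  have h1 : U * star U = 1 := (Matrix.mem_unitaryGroup_iff).mp hU
  have CM : ∀ M : Matrix n n ℂ, charmatrix M = Matrix.scalar n (X : ℂ[X]) - M.map C := by
    intro M; rfl
  have key : charmatrix (U * D * star U) =
      U.map C * charmatrix D * (star U).map C := by
    rw [CM, CM, Matrix.map_mul, Matrix.map_mul]
    rw [mul_sub, sub_mul]
    congr 1
    rw [mul_assoc, (Matrix.scalar_commute (X : ℂ[X]) (fun r => Commute.all _ _) ((star U).map C)).eq,
      ← mul_assoc, ← Matrix.map_mul, h1]
    simp
  rw [Matrix.charpoly, Matrix.charpoly, key, Matrix.det_mul, Matrix.det_mul,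
    mul_comm, ← mul_assoc, ← Matrix.det_mul, ← Matrix.map_mul]
  have h2 : star U * U = 1 := (Matrix.mem_unitaryGroup_iff').mp hU
  rw [h2]
  simp

lemma aux_herm_charpoly {n : Type*} [Fintype n] [DecidableEq n] {A : Matrix n n ℂ}
    (hA : A.IsHermitian) :
    A.charpoly = ∏ i, (X - C ((hA.eigenvalues i : ℂ))) := by
  conv_lhs => rw [hA.spectral_theorem]
  rw [Unitary.conjStarAlgAut_apply, aux_charpoly_conj _ _ hA.eigenvectorUnitary.2, aux_charpoly_diag]
  rfl

lemma aux_multiset_eq_of_prod_eq {ι : Type*} [Fintype ι] (f g : ι → ℝ)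
    (h : ∏ i, (X - C ((f i : ℂ))) = ∏ i, (X - C ((g i : ℂ)))) :
    Finset.univ.val.map f = Finset.univ.val.map g := by
  have hf : ∀ c : ι → ℝ,
      (∏ i, (X - C ((c i : ℂ)))).roots = Finset.univ.val.map (fun i => (c i : ℂ)) := by
    intro c
    have h2 := Polynomial.roots_multiset_prod_X_sub_C (Finset.univ.val.map (fun i => (c i : ℂ)))
    rw [Multiset.map_map] at h2
    rw [Finset.prod_eq_multiset_prod]
    simpa [Function.comp] using h2
  have h2 : Finset.univ.val.map (fun i => (f i : ℂ)) = Finset.univ.val.map (fun i => (g i : ℂ)) := by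
    rw [← hf f, ← hf g, h]
  apply Multiset.map_injective (f := (Complex.ofReal : ℝ → ℂ)) Complex.ofReal_injective
  simpa [Multiset.map_map, Function.comp] using h2

/-! ### The explicit block-positive matrix -/

def Wmat : Matrix (Fin 2 × Fin 2) (Fin 2 × Fin 2) ℂ := fun p q =>
  if p = (0,0) ∧ q = (0,0) then 1
  else if p = (1,1) ∧ q = (1,1) then 4
  else if p = (0,1) ∧ q = (1,0) then 2
  else if p = (1,0) ∧ q = (0,1) then 2 else 0

def e4 : Fin 4 ≃ Fin 2 × Fin 2 where
  toFun := ![(0,0),(0,1),(1,0),(1,1)]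
  invFun := fun p => ![![0,1],![2,3]] p.1 p.2
  left_inv := by decide
  right_inv := by decide

lemma Wmat_herm : Wmat.IsHermitian := by
  ext p q
  rcases p with ⟨i, j⟩; rcases q with ⟨k, l⟩
  fin_cases i <;> fin_cases j <;> fin_cases k <;> fin_cases l <;>
    simp [Wmat, Matrix.conjTranspose_apply] <;>
    norm_num [Prod.ext_iff, Fin.ext_iff]

lemma Wmat_charpoly :
    Wmat.charpoly = (X - C 4) * (X - C 2) * (X - C 1) * (X - C (-2)) := by
  have h := Matrix.det_submatrix_equiv_self e4 (charmatrix Wmat)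
  have hsub : (charmatrix Wmat).submatrix e4 e4 =
      !![X - C 1, 0, 0, 0; 0, X, -C 2, 0; 0, -C 2, X, 0; 0, 0, 0, X - C 4] := by
    ext i j
    fin_cases i <;> fin_cases j <;>
      norm_num [e4, charmatrix_apply, Wmat, Matrix.diagonal_apply, Matrix.cons_val_zero,
        Matrix.cons_val_one, Matrix.head_cons, Matrix.cons_val_succ, Matrix.vecHead,
        Matrix.vecTail, Prod.ext_iff, Fin.ext_iff]
  rw [Matrix.charpoly, ← h, hsub]
  simp [Matrix.det_succ_row_zero, Fin.sum_univ_succ]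
  ring_nf

lemma Wmat_bp : BlockPositive Wmat := by
  intro a b
  have hexp : star (fun p : Fin 2 × Fin 2 => a p.1 * b p.2) ⬝ᵥ
      Wmat *ᵥ (fun p : Fin 2 × Fin 2 => a p.1 * b p.2) =
      (starRingEnd ℂ) (a 0 * b 0) * (a 0 * b 0) + 4 * ((starRingEnd ℂ) (a 1 * b 1) * (a 1 * b 1))
        + 2 * ((starRingEnd ℂ) (a 0 * b 1) * (a 1 * b 0))
        + 2 * ((starRingEnd ℂ) (a 1 * b 0) * (a 0 * b 1)) := by
    simp [dotProduct, Matrix.mulVec, Wmat, Fintype.sum_prod_type, Fin.sum_univ_two,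
      Prod.ext_iff, Fin.ext_iff, -Fin.val_eq_zero_iff]
    ring
  rw [hexp]
  set x := a 0 * b 0
  set y := a 1 * b 1
  set z := a 0 * b 1
  set t := a 1 * b 0
  have hzt : z * t = x * y := by simp [x, y, z, t]; ring
  have h1 : (starRingEnd ℂ) x * x = ((Complex.normSq x : ℝ) : ℂ) := by
    rw [Complex.normSq_eq_conj_mul_self]
  have h2 : (starRingEnd ℂ) y * y = ((Complex.normSq y : ℝ) : ℂ) := by
    rw [Complex.normSq_eq_conj_mul_self]
  have h3 : (starRingEnd ℂ) t * z = (starRingEnd ℂ) ((starRingEnd ℂ) z * t) := by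
    simp; ring
  have hre : 2 * ((starRingEnd ℂ) z * t) + 2 * ((starRingEnd ℂ) t * z)
      = ((4 * ((starRingEnd ℂ) z * t).re : ℝ) : ℂ) := by
    rw [h3]
    rw [show (2:ℂ) * ((starRingEnd ℂ) z * t) + 2 * (starRingEnd ℂ) ((starRingEnd ℂ) z * t)
      = 2 * (((starRingEnd ℂ) z * t) + (starRingEnd ℂ) ((starRingEnd ℂ) z * t)) by ring]
    rw [Complex.add_conj]
    push_cast
    ring
  calc (0:ℂ) ≤ ((Complex.normSq x + 4 * Complex.normSq y + 4 * ((starRingEnd ℂ) z * t).re : ℝ) : ℂ) := by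
        rw [Complex.zero_le_real]
        have hb : -(‖x‖ * ‖y‖) ≤ ((starRingEnd ℂ) z * t).re := by
          have h := Complex.abs_re_le_norm ((starRingEnd ℂ) z * t)
          have habs : ‖(starRingEnd ℂ) z * t‖ = ‖x‖ * ‖y‖ := by
            rw [norm_mul, Complex.norm_conj, ← norm_mul, hzt, norm_mul]
          rw [habs] at h
          have h2 := (abs_le.mp h).1
          linarith
        have hx := Complex.sq_norm x
        have hy := Complex.sq_norm y
        nlinarith [sq_nonneg (‖x‖ - 2 * ‖y‖), norm_nonneg x, norm_nonneg y]
      _ = _ := by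
        rw [h1, h2]
        push_cast at hre ⊢
        linear_combination -hre

/-! ### At most one negative eigenvalue -/

lemma prod_decomp (v : Fin 2 × Fin 2 → ℂ)
    (hdet : v (0,0) * v (1,1) = v (0,1) * v (1,0)) :
    ∃ a b : Fin 2 → ℂ, ∀ r, v r = a r.1 * b r.2 := by
  have hdet' : v 0 * v 1 = v (0,1) * v (1,0) := hdet
  by_cases h : v (0,0) = 0
  · by_cases h2 : v (0,1) = 0
    · refine ⟨![0,1], ![v (1,0), v (1,1)], ?_⟩
      rintro ⟨i,j⟩
      fin_cases i <;> fin_cases j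
      · show v (0,0) = _; simpa using h
      · show v (0,1) = _; simpa using h2
      · show v (1,0) = _; simp
      · show v (1,1) = _; simp
    · have h10 : v (1,0) = 0 := by
        rw [h, zero_mul] at hdet
        rcases mul_eq_zero.mp hdet.symm with h' | h'
        · exact absurd h' h2
        · exact h'
      refine ⟨![v (0,1), v (1,1)], ![0, 1], ?_⟩
      rintro ⟨i,j⟩
      fin_cases i <;> fin_cases j
      · show v (0,0) = _; simpa using h
      · show v (0,1) = _; simp
      · show v (1,0) = _; simpa using h10
      · show v (1,1) = _; simp
  · have h' : v 0 ≠ 0 := h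
    refine ⟨![v (0,0), v (1,0)], ![1, v (0,1) / v (0,0)], ?_⟩
    rintro ⟨i,j⟩
    fin_cases i <;> fin_cases j
    · show v (0,0) = _; simp
    · show v (0,1) = _; simp; field_simp
    · show v (1,0) = _; simp
    · show v (1,1) = _; simp; field_simp; linear_combination hdet'

lemma exists_root_pair (A B C : ℂ) :
    ∃ c₁ c₂ : ℂ, ¬(c₁ = 0 ∧ c₂ = 0) ∧ A * c₁^2 + B * c₁ * c₂ + C * c₂^2 = 0 := by
  by_cases hA : A = 0
  · exact ⟨1, 0, by simp, by simp [hA]⟩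
  · obtain ⟨d, hd⟩ := IsAlgClosed.exists_pow_nat_eq (B^2 - 4*A*C) (n := 2) (by norm_num)
    refine ⟨-B + d, 2*A, ?_, ?_⟩
    · rintro ⟨-, h2⟩
      exact hA (by simpa using h2)
    · linear_combination A * hd

lemma no_two_neg {W : Matrix (Fin 2 × Fin 2) (Fin 2 × Fin 2) ℂ} (hBP : BlockPositive W)
    (hW : W.IsHermitian) {p q : Fin 2 × Fin 2} (hpq : p ≠ q)
    (hp : hW.eigenvalues p < 0) (hq : hW.eigenvalues q < 0) : False := by
  set u : Fin 2 × Fin 2 → ℂ := ⇑(hW.eigenvectorBasis p) with hu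
  set w : Fin 2 × Fin 2 → ℂ := ⇑(hW.eigenvectorBasis q) with hw
  have horth := orthonormal_iff_ite.mp hW.eigenvectorBasis.orthonormal
  have huu : star u ⬝ᵥ u = 1 := by
    have := horth p p
    rw [EuclideanSpace.inner_eq_star_dotProduct, dotProduct_comm] at this
    simpa using this
  have hww : star w ⬝ᵥ w = 1 := by
    have := horth q q
    rw [EuclideanSpace.inner_eq_star_dotProduct, dotProduct_comm] at this
    simpa using this
  have huw : star u ⬝ᵥ w = 0 := by
    have := horth p q
    rw [EuclideanSpace.inner_eq_star_dotProduct, dotProduct_comm] at this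
    simpa [hpq] using this
  have hwu : star w ⬝ᵥ u = 0 := by
    have := horth q p
    rw [EuclideanSpace.inner_eq_star_dotProduct, dotProduct_comm] at this
    simpa [hpq.symm] using this
  obtain ⟨c₁, c₂, hc, hquad⟩ := exists_root_pair
    (u (0,0) * u (1,1) - u (0,1) * u (1,0))
    (u (0,0) * w (1,1) + w (0,0) * u (1,1) - u (0,1) * w (1,0) - w (0,1) * u (1,0))
    (w (0,0) * w (1,1) - w (0,1) * w (1,0))
  set v : Fin 2 × Fin 2 → ℂ := fun r => c₁ * u r + c₂ * w r with hv
  have hdet : v (0,0) * v (1,1) = v (0,1) * v (1,0) := by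
    simp only [hv]
    linear_combination hquad
  obtain ⟨a, b, hab⟩ := prod_decomp v hdet
  have hbp := hBP a b
  have hfun : (fun r : Fin 2 × Fin 2 => a r.1 * b r.2) = v := funext fun r => (hab r).symm
  rw [hfun] at hbp
  have hvdec : v = c₁ • u + c₂ • w := by funext r; simp [hv]
  have hWu : W *ᵥ u = (hW.eigenvalues p : ℂ) • u := by
    rw [hu, hW.mulVec_eigenvectorBasis]
    funext r
    simp [Complex.real_smul]
  have hWw : W *ᵥ w = (hW.eigenvalues q : ℂ) • w := by
    rw [hw, hW.mulVec_eigenvectorBasis]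
    funext r
    simp [Complex.real_smul]
  have hval : star v ⬝ᵥ W *ᵥ v =
      ((Complex.normSq c₁ * hW.eigenvalues p + Complex.normSq c₂ * hW.eigenvalues q : ℝ) : ℂ) := by
    rw [hvdec, Matrix.mulVec_add, Matrix.mulVec_smul, Matrix.mulVec_smul, hWu, hWw]
    rw [star_add, star_smul, star_smul]
    simp only [add_dotProduct, smul_dotProduct, dotProduct_add,
      dotProduct_smul, smul_eq_mul]
    rw [huu, hww, huw, hwu]
    have n1 : ((Complex.normSq c₁ : ℝ) : ℂ) = star c₁ * c₁ := by
      rw [Complex.normSq_eq_conj_mul_self]; rfl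
    have n2 : ((Complex.normSq c₂ : ℝ) : ℂ) = star c₂ * c₂ := by
      rw [Complex.normSq_eq_conj_mul_self]; rfl
    push_cast
    rw [n1, n2]
    ring
  rw [hval] at hbp
  rw [Complex.zero_le_real] at hbp
  have h1 : 0 ≤ Complex.normSq c₁ := Complex.normSq_nonneg c₁
  have h2 : 0 ≤ Complex.normSq c₂ := Complex.normSq_nonneg c₂
  have hpos : 0 < Complex.normSq c₁ ∨ 0 < Complex.normSq c₂ := by
    rcases not_and_or.mp hc with h | h
    · left; exact Complex.normSq_pos.mpr h
    · right; exact Complex.normSq_pos.mpr h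
  rcases hpos with h | h <;> nlinarith

/-! ### Membership lemma -/

lemma mem_spectra_of_prod (μ : Fin 2 × Fin 2 → ℝ)
    (hprod : ∏ p : Fin 2 × Fin 2, (X - C ((μ p : ℂ)))
      = (X - C 4) * (X - C 2) * (X - C 1) * (X - C (-2))) : μ ∈ spectraBP22 := by
  refine ⟨Wmat, Wmat_bp, Wmat_herm, ?_⟩
  apply aux_multiset_eq_of_prod_eq
  rw [← aux_herm_charpoly Wmat_herm, Wmat_charpoly, hprod]

theorem stmt_7 (v₁ v₂ : (Fin 2 × Fin 2) → ℝ)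
    (hv₁ : v₁ = fun p => if p = (0, 0) then 4 else if p = (0, 1) then 2
      else if p = (1, 0) then 1 else -2)
    (hv₂ : v₂ = fun p => if p = (0, 0) then 4 else if p = (0, 1) then 2
      else if p = (1, 0) then -2 else 1) :
    v₁ ∈ spectraBP22 ∧ v₂ ∈ spectraBP22 ∧
      (1 / 2 : ℝ) • v₁ + (1 / 2 : ℝ) • v₂ ∉ spectraBP22 ∧
      ¬ Convex ℝ spectraBP22 := by
  subst hv₁ hv₂
  have hmem₁ : (fun p : Fin 2 × Fin 2 => if p = (0, 0) then (4:ℝ) else if p = (0, 1) then 2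
      else if p = (1, 0) then 1 else -2) ∈ spectraBP22 := by
    apply mem_spectra_of_prod
    rw [Fintype.prod_prod_type]
    simp only [Fin.prod_univ_two]
    norm_num [Prod.ext_iff, Fin.ext_iff]
    ring
  have hmem₂ : (fun p : Fin 2 × Fin 2 => if p = (0, 0) then (4:ℝ) else if p = (0, 1) then 2
      else if p = (1, 0) then -2 else 1) ∈ spectraBP22 := by
    apply mem_spectra_of_prod
    rw [Fintype.prod_prod_type]
    simp only [Fin.prod_univ_two]
    norm_num [Prod.ext_iff, Fin.ext_iff]
    ring
  have hmid : ((1 / 2 : ℝ) • (fun p : Fin 2 × Fin 2 => if p = (0, 0) then (4:ℝ)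
        else if p = (0, 1) then 2 else if p = (1, 0) then 1 else -2)
      + (1 / 2 : ℝ) • (fun p : Fin 2 × Fin 2 => if p = (0, 0) then (4:ℝ)
        else if p = (0, 1) then 2 else if p = (1, 0) then -2 else 1)) ∉ spectraBP22 := by
    intro hmem
    obtain ⟨W, hBP, hW, hmult⟩ := hmem
    have huniv : (Finset.univ.val : Multiset (Fin 2 × Fin 2))
        = {(0,0), (0,1), (1,0), (1,1)} := by decide
    have hcount : Multiset.count (-(1/2) : ℝ) (Finset.univ.val.map hW.eigenvalues) = 2 := by
      rw [hmult, huniv]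
      norm_num [Prod.ext_iff, Fin.ext_iff, Multiset.count_cons, Multiset.count_singleton, -Fin.val_eq_zero_iff]
    rw [Multiset.count_map] at hcount
    classical
    set s : Finset (Fin 2 × Fin 2) :=
      Finset.univ.filter (fun p : Fin 2 × Fin 2 => (-(1/2) : ℝ) = hW.eigenvalues p) with hs
    have hcard : s.card = 2 := by
      rw [hs, Finset.card_def, Finset.filter_val]
      convert hcount using 2
    obtain ⟨p, hp, q, hq, hpq⟩ := Finset.one_lt_card.mp (by rw [hcard]; norm_num : 1 < s.card)
    have hpe : hW.eigenvalues p = -(1/2) := ((Finset.mem_filter.mp hp).2).symm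
    have hqe : hW.eigenvalues q = -(1/2) := ((Finset.mem_filter.mp hq).2).symm
    exact no_two_neg hBP hW hpq (by rw [hpe]; norm_num) (by rw [hqe]; norm_num)
  refine ⟨hmem₁, hmem₂, hmid, ?_⟩
  intro hconv
  exact hmid (hconv hmem₁ hmem₂ (by norm_num) (by norm_num) (by norm_num))
end
end

section
/- Fix n ≥ 2 and real numbers μ₁↓ ≥ ⋯ ≥ μ_{2n}↓ and reals a, b, c with [[a,b],[b,c]] ⪰ 0. There exist z₁,…,z_{2n−1} ≥ 0 satisfying −2b + z_{2n−1} ≤ μ_{2n}↓; −z_k + z_{k−1} ≤ μ_k↓ for k = 4,…,2n−1; 2c − z₃ + z₂ ≤ μ₃↓; 2b − z₂ + z₁ ≤ μ₂↓; and 2a − z₁ ≤ μ₁↓, if and only if: −2b ≤ Σ_{j=k}^{2n} μⱼ↓ for k = 4,…,2n; 2c − 2b ≤ Σ_{j=3}^{2n} μⱼ↓; 2c ≤ Σ_{j=2}^{2n} μⱼ↓; and 2a + 2c ≤ Σ_{j=1}^{2n} μⱼ↓. -/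
open Matrix BigOperators

noncomputable section

lemma sum_cons_aux (f : ℕ → ℝ) (k m : ℕ) (h : k ≤ m) :
    ∑ j ∈ Finset.Icc k m, f j = f k + ∑ j ∈ Finset.Icc (k+1) m, f j := by
  rw [show Finset.Icc k m = insert k (Finset.Icc (k+1) m) by
    rw [Finset.Icc_add_one_left_eq_Ioc, Finset.Ioc_insert_left h],
    Finset.sum_insert (by simp)]

theorem stmt_19 (n : ℕ) (hn : 2 ≤ n) (μ : ℕ → ℝ)
    (hsort : ∀ j k, 1 ≤ j → j ≤ k → k ≤ 2 * n → μ k ≤ μ j)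
    (a b c : ℝ) (habc : (!![a, b; b, c] : Matrix (Fin 2) (Fin 2) ℝ).PosSemidef) :
    (∃ z : ℕ → ℝ,
        (∀ k, 1 ≤ k → k ≤ 2 * n - 1 → 0 ≤ z k) ∧
        -2 * b + z (2 * n - 1) ≤ μ (2 * n) ∧
        (∀ k, 4 ≤ k → k ≤ 2 * n - 1 → -z k + z (k - 1) ≤ μ k) ∧
        2 * c - z 3 + z 2 ≤ μ 3 ∧
        2 * b - z 2 + z 1 ≤ μ 2 ∧
        2 * a - z 1 ≤ μ 1) ↔
      ((∀ k, 4 ≤ k → k ≤ 2 * n → -2 * b ≤ ∑ j ∈ Finset.Icc k (2 * n), μ j) ∧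
        2 * c - 2 * b ≤ ∑ j ∈ Finset.Icc 3 (2 * n), μ j ∧
        2 * c ≤ ∑ j ∈ Finset.Icc 2 (2 * n), μ j ∧
        2 * a + 2 * c ≤ ∑ j ∈ Finset.Icc 1 (2 * n), μ j) := by
  constructor
  · rintro ⟨z, hz0, h1, h4, h3, h2, ha⟩
    -- key telescoping estimate
    have key : ∀ m k, 3 ≤ k → k ≤ 2 * n - 1 → 2 * n - 1 - k ≤ m →
        -2 * b + z k ≤ ∑ j ∈ Finset.Icc (k+1) (2*n), μ j := by
      intro m
      induction m with
      | zero =>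
        intro k h3k hk hm
        have hk' : k = 2 * n - 1 := by omega
        subst hk'
        have : (2 * n - 1) + 1 = 2 * n := by omega
        rw [this, Finset.Icc_self, Finset.sum_singleton]
        exact h1
      | succ m ih =>
        intro k h3k hk hm
        by_cases hk' : k = 2 * n - 1
        · subst hk'
          have : (2 * n - 1) + 1 = 2 * n := by omega
          rw [this, Finset.Icc_self, Finset.sum_singleton]
          exact h1
        · have hlt : k + 1 ≤ 2 * n - 1 := by omega
          have hih := ih (k+1) (by omega) hlt (by omega)
          have h4k := h4 (k+1) (by omega) hlt
          have hsimp : k + 1 - 1 = k := by omega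
          rw [hsimp] at h4k
          rw [sum_cons_aux μ (k+1) (2*n) (by omega)]
          linarith
    have key3 : -2 * b + z 3 ≤ ∑ j ∈ Finset.Icc 4 (2*n), μ j := by
      have := key (2*n) 3 (by omega) (by omega) (by omega)
      simpa using this
    have hz2 : 0 ≤ z 2 := hz0 2 (by omega) (by omega)
    have hz1 : 0 ≤ z 1 := hz0 1 (by omega) (by omega)
    have s3 : 2 * c - 2 * b + z 2 ≤ ∑ j ∈ Finset.Icc 3 (2*n), μ j := by
      rw [sum_cons_aux μ 3 (2*n) (by omega)]
      linarith
    have s2 : 2 * c + z 1 ≤ ∑ j ∈ Finset.Icc 2 (2*n), μ j := by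
      rw [sum_cons_aux μ 2 (2*n) (by omega)]
      linarith
    have s1 : 2 * a + 2 * c ≤ ∑ j ∈ Finset.Icc 1 (2*n), μ j := by
      rw [sum_cons_aux μ 1 (2*n) (by omega)]
      linarith
    refine ⟨?_, by linarith, by linarith, s1⟩
    intro k h4k hk
    have hkey := key (2*n) (k-1) (by omega) (by omega) (by omega)
    have hzk : 0 ≤ z (k-1) := hz0 (k-1) (by omega) (by omega)
    have : (k - 1) + 1 = k := by omega
    rw [this] at hkey
    linarith
  · rintro ⟨h4, h3, h2, h1⟩
    set S : ℕ → ℝ := fun k => ∑ j ∈ Finset.Icc k (2*n), μ j with hS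
    refine ⟨fun m => if m = 1 then S 2 - 2*c else if m = 2 then 2*b - 2*c + S 3
        else 2*b + S (m+1), ?_, ?_, ?_, ?_, ?_, ?_⟩
    · intro k hk1 hk2
      by_cases k1 : k = 1
      · subst k1; simp only [if_pos rfl, if_true]; linarith
      by_cases k2 : k = 2
      · subst k2; simp only [if_neg (by omega : (2:ℕ) ≠ 1), if_pos rfl, if_true]; linarith
      · simp only [if_neg k1, if_neg k2]
        have := h4 (k+1) (by omega) (by omega)
        linarith
    · simp only [if_neg (by omega : 2*n-1 ≠ 1), if_neg (by omega : 2*n-1 ≠ 2)]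
      have : (2*n - 1) + 1 = 2*n := by omega
      rw [this]
      have : S (2*n) = μ (2*n) := by
        simp [hS, Finset.Icc_self]
      rw [this]; linarith
    · intro k h4k hk
      simp only [if_neg (by omega : k ≠ 1), if_neg (by omega : k ≠ 2),
        if_neg (by omega : k - 1 ≠ 1), if_neg (by omega : k - 1 ≠ 2)]
      have hkk : (k - 1) + 1 = k := by omega
      rw [hkk]
      have : S k = μ k + S (k+1) := sum_cons_aux μ k (2*n) (by omega)
      linarith
    · simp only [if_neg (by omega : (3:ℕ) ≠ 1), if_neg (by omega : (3:ℕ) ≠ 2),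
        if_neg (by omega : (2:ℕ) ≠ 1), if_pos rfl, if_true]
      have : S 3 = μ 3 + S 4 := sum_cons_aux μ 3 (2*n) (by omega)
      linarith
    · simp only [if_pos rfl, if_true, if_neg (by omega : (2:ℕ) ≠ 1)]
      have : S 2 = μ 2 + S 3 := sum_cons_aux μ 2 (2*n) (by omega)
      linarith
    · simp only [if_pos rfl, if_true]
      have : S 1 = μ 1 + S 2 := sum_cons_aux μ 1 (2*n) (by omega)
      linarith
end
end
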